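/- Let $p = (p_1, \dots, p_d)$ be a probability distribution. Then the Shannon entropy satisfies $H(p) \ge -\log_2 \sum_k p_k^2$ (Rényi-2 bounds Shannon from below), and consequently for a complete set of $d+1$ MUBs measured on state $\rho$, $\sum_{i=1}^{d+1} H(M_i) \ge -(d+1)\log_2\frac{\mathrm{tr}(\rho^2)+1}{d+1}$ follows from concavity of $-\log_2$ and the identity $\sum_{i,k}(p^{(i)}_k)^2 = \mathrm{tr}(\rho^2)+1$. -/

import Mathlib

open scoped BigOperators ComplexOrder

/-- Hermitian inner product on `Fin n → ℂ`. -/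
noncomputable def inn {n : ℕ} (u v : Fin n → ℂ) : ℂ :=
  ∑ i, (starRingEnd ℂ) (u i) * v i

lemma shannon_ge_renyi2 {n : ℕ} (q : Fin n → ℝ) (h0 : ∀ k, 0 ≤ q k)
    (h1 : ∑ k, q k = 1) :
    -∑ k, q k * Real.logb 2 (q k) ≥ -Real.logb 2 (∑ k, (q k) ^ 2) := by
  classical
  set t : Finset (Fin n) := Finset.univ.filter (fun k => q k ≠ 0) with ht
  have hsum1 : ∑ k ∈ t, q k = 1 := by
    rw [ht, Finset.sum_filter_ne_zero]; exact h1
  have hmem : ∀ k ∈ t, q k ∈ Set.Ioi (0:ℝ) := by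
    intro k hk
    have := (Finset.mem_filter.mp hk).2
    exact lt_of_le_of_ne (h0 k) (Ne.symm this)
  have hjen := (strictConcaveOn_log_Ioi.concaveOn).le_map_sum
    (t := t) (w := q) (p := q) (fun k _ => h0 k) hsum1 hmem
  have hq2 : ∑ k ∈ t, q k • q k = ∑ k, (q k)^2 := by
    rw [ht]
    rw [Finset.sum_filter_of_ne]
    · exact Finset.sum_congr rfl fun k _ => by simp [sq]
    · intro k _ h
      intro hq; rw [hq] at h; simp at h
  have hlog : ∑ k, q k * Real.log (q k) ≤ Real.log (∑ k, (q k)^2) := by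
    have he : ∑ k, q k * Real.log (q k) = ∑ k ∈ t, q k • Real.log (q k) := by
      rw [ht, Finset.sum_filter_of_ne]
      · rfl
      · intro k _ h hq; rw [hq] at h; simp at h
    rw [he, ← hq2]
    exact hjen
  have hl2 : (0:ℝ) < Real.log 2 := Real.log_pos one_lt_two
  have : ∑ k, q k * Real.logb 2 (q k) ≤ Real.logb 2 (∑ k, (q k)^2) := by
    simp only [Real.logb]
    have : ∑ x, q x * (Real.log (q x) / Real.log 2)
        = (∑ x, q x * Real.log (q x)) / Real.log 2 := by
      rw [Finset.sum_div]; exact Finset.sum_congr rfl fun k _ => by ring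
    rw [this]
    exact div_le_div_of_nonneg_right hlog hl2.le
  linarith

/-- Rényi-2 lower-bounds Shannon entropy: H(p) ≥ −log₂ ∑ pₖ²; consequently for
a complete set of d+1 MUBs measured on ρ,
∑ᵢ H(Mᵢ) ≥ −(d+1) log₂((tr ρ² + 1)/(d+1)). -/
theorem renyi2_bound_and_cmub_entropy_sum (d : ℕ) (hd : 0 < d)
    (B : Fin (d + 1) → Fin d → Fin d → ℂ)
    (hON : ∀ i, ∀ j k, inn (B i j) (B i k) = if j = k then 1 else 0)
    (hMUB : ∀ i j, i ≠ j → ∀ k l,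
      ‖inn (B i k) (B j l)‖ ^ 2 = 1 / d)
    (ρ : Matrix (Fin d) (Fin d) ℂ) (hρ : ρ.PosSemidef) (htr : ρ.trace = 1)
    (p : Fin (d + 1) → Fin d → ℝ)
    (hp : ∀ i k, p i k =
      (∑ a, ∑ b, (starRingEnd ℂ) (B i k a) * ρ a b * B i k b).re) :
    (∀ (q : Fin d → ℝ), (∀ k, 0 ≤ q k) → (∑ k, q k = 1) →
      -∑ k, q k * Real.logb 2 (q k) ≥ -Real.logb 2 (∑ k, (q k) ^ 2)) ∧
    (∑ i, -∑ k, p i k * Real.logb 2 (p i k)) ≥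
      -((d : ℝ) + 1) * Real.logb 2 ((((ρ * ρ).trace).re + 1) / ((d : ℝ) + 1)) := by
  classical
  refine ⟨fun q h0 h1 => shannon_ge_renyi2 q h0 h1, ?_⟩
  have hd0 : (d:ℝ) ≠ 0 := Nat.cast_ne_zero.mpr hd.ne'
  have hdR : (0:ℝ) < d := Nat.cast_pos.mpr hd
  have hdc : (d:ℂ) ≠ 0 := Nat.cast_ne_zero.mpr hd.ne'
  -- the complex value of each probability
  have hval0 : ∀ i k, (0:ℂ) ≤ ∑ a, ∑ b, (starRingEnd ℂ) (B i k a) * ρ a b * B i k b := by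
    intro i k
    have hnn := hρ.dotProduct_mulVec_nonneg (B i k)
    have heq : dotProduct (star (B i k)) (ρ.mulVec (B i k))
        = ∑ a, ∑ b, (starRingEnd ℂ) (B i k a) * ρ a b * B i k b := by
      simp only [dotProduct, Matrix.mulVec, Pi.star_apply, Finset.mul_sum]
      exact Finset.sum_congr rfl fun a _ => Finset.sum_congr rfl fun b _ => by
        simp [Complex.star_def]; ring
    rwa [heq] at hnn
  have hval : ∀ i k, (∑ a, ∑ b, (starRingEnd ℂ) (B i k a) * ρ a b * B i k b)
      = ((p i k : ℝ) : ℂ) := by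
    intro i k
    rcases Complex.nonneg_iff.mp (hval0 i k) with ⟨hre, him⟩
    rw [hp i k]
    apply Complex.ext
    · simp
    · simp [← him]
  have hge0 : ∀ i k, 0 ≤ p i k := by
    intro i k
    rw [hp i k]
    exact (Complex.nonneg_iff.mp (hval0 i k)).1
  -- completeness of each basis
  have hComp : ∀ i a b, ∑ k, B i k a * (starRingEnd ℂ) (B i k b)
      = if a = b then 1 else 0 := by
    intro i a b
    set U : Matrix (Fin d) (Fin d) ℂ := Matrix.of fun k a => (starRingEnd ℂ) (B i k a) with hU
    have hUU : U * U.conjTranspose = 1 := by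
      ext j k
      have := hON i j k
      simp only [Matrix.mul_apply, Matrix.conjTranspose_apply, hU, Matrix.of_apply,
        Matrix.one_apply]
      rw [← this]
      simp [inn, Complex.star_def]
    have hUU' : U.conjTranspose * U = 1 := mul_eq_one_comm.mp hUU
    have := congrFun (congrFun hUU' a) b
    simp only [Matrix.mul_apply, Matrix.conjTranspose_apply, hU, Matrix.of_apply,
      Matrix.one_apply, Complex.star_def, RingHom.id_apply, starRingEnd_self_apply] at this
    rw [← this]
  -- each row of p sums to 1
  have htrace : ∑ a, ρ a a = 1 := by
    simpa [Matrix.trace, Matrix.diag] using htr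
  have hsum_pC : ∀ i, ∑ k, ((p i k : ℝ) : ℂ) = 1 := by
    intro i
    calc ∑ k, ((p i k:ℝ):ℂ)
        = ∑ k, ∑ a, ∑ b, (starRingEnd ℂ) (B i k a) * ρ a b * B i k b :=
          Finset.sum_congr rfl fun k _ => (hval i k).symm
      _ = ∑ a, ∑ b, ∑ k, (starRingEnd ℂ) (B i k a) * ρ a b * B i k b := by
          rw [Finset.sum_comm]
          exact Finset.sum_congr rfl fun a _ => Finset.sum_comm
      _ = ∑ a, ∑ b, ρ a b * ∑ k, B i k b * (starRingEnd ℂ) (B i k a) := by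
          refine Finset.sum_congr rfl fun a _ => Finset.sum_congr rfl fun b _ => ?_
          rw [Finset.mul_sum]
          exact Finset.sum_congr rfl fun k _ => by ring
      _ = ∑ a, ρ a a := by
          refine Finset.sum_congr rfl fun a _ => ?_
          simp [hComp i _ a]
      _ = 1 := htrace
  have hsum_p : ∀ i, ∑ k, p i k = 1 := by
    intro i
    exact_mod_cast (Complex.ofReal_sum Finset.univ (p i)) ▸ hsum_pC i
  -- matrix setup
  set K := starRingEnd ℂ with hK
  set Pi' : Fin (d+1) → Fin d → Matrix (Fin d) (Fin d) ℂ :=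
    fun i k => Matrix.of fun a b => B i k a * K (B i k b) with hPi'
  set c : Fin (d+1) → Fin d → ℝ := fun i k => p i k - 1/d with hc
  set Pt : Fin (d+1) → Fin d → Matrix (Fin d) (Fin d) ℂ :=
    fun i k => Pi' i k - (d:ℂ)⁻¹ • 1 with hPt
  set ρt : Matrix (Fin d) (Fin d) ℂ := ρ - (d:ℂ)⁻¹ • 1 with hρt
  set X : Matrix (Fin d) (Fin d) ℂ := ∑ i, ∑ k, ((c i k : ℝ):ℂ) • Pt i k with hX
  set A : Matrix (Fin d) (Fin d) ℂ := ρt - X with hA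
  have htrPi : ∀ i k, (Pi' i k).trace = 1 := by
    intro i k
    have := hON i k k
    rw [if_pos rfl] at this
    simp only [inn] at this
    simp only [Matrix.trace, Matrix.diag, hPi', Matrix.of_apply]
    rw [← this]
    exact Finset.sum_congr rfl fun a _ => mul_comm _ _
  have htrρPi : ∀ i k, (ρ * Pi' i k).trace = ((p i k : ℝ):ℂ) := by
    intro i k
    rw [← hval i k]
    simp only [Matrix.trace, Matrix.diag, Matrix.mul_apply, hPi', Matrix.of_apply]
    exact Finset.sum_congr rfl fun a _ => Finset.sum_congr rfl fun b _ => by ring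
  have htrPiPi : ∀ i k j l, (Pi' i k * Pi' j l).trace
      = inn (B i k) (B j l) * inn (B j l) (B i k) := by
    intro i k j l
    simp only [inn, Finset.sum_mul_sum]
    simp only [Matrix.trace, Matrix.diag, Matrix.mul_apply, hPi', Matrix.of_apply]
    rw [Finset.sum_comm]
    exact Finset.sum_congr rfl fun b _ => Finset.sum_congr rfl fun a _ => by ring
  have hinn_conj : ∀ (u v : Fin d → ℂ), inn u v = K (inn v u) := by
    intro u v
    simp only [inn, map_sum, map_mul, Complex.conj_conj, hK]
    exact Finset.sum_congr rfl fun a _ => mul_comm _ _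
  have htrPtPt : ∀ i k j l, (Pt i k * Pt j l).trace
      = (Pi' i k * Pi' j l).trace - (d:ℂ)⁻¹ := by
    intro i k j l
    simp only [hPt, Matrix.sub_mul, Matrix.mul_sub, Matrix.smul_mul, Matrix.mul_smul,
      Matrix.trace_sub, Matrix.trace_smul, Matrix.trace_one, Fintype.card_fin, htrPi, one_mul, mul_one,
      Matrix.one_mul, Matrix.mul_one, smul_smul, smul_eq_mul]
    field_simp
    ring
  have htrPtPt_same : ∀ i k l, (Pt i k * Pt i l).trace
      = ((if k = l then 1 else 0) : ℂ) - (d:ℂ)⁻¹ := by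
    intro i k l
    rw [htrPtPt, htrPiPi, hON i k l, hON i l k]
    by_cases h : k = l
    · simp [h]
    · simp [h, Ne.symm h]
  have htrPtPt_diff : ∀ i j, i ≠ j → ∀ k l, (Pt i k * Pt j l).trace = 0 := by
    intro i j hij k l
    rw [htrPtPt, htrPiPi, hinn_conj (B j l) (B i k), hK, Complex.mul_conj,
      ← Complex.sq_norm, hMUB i j hij k l]
    push_cast
    field_simp
    ring
  have htrρtPt : ∀ i k, (ρt * Pt i k).trace = ((c i k : ℝ):ℂ) := by
    intro i k
    simp only [hρt, hPt, Matrix.sub_mul, Matrix.mul_sub, Matrix.smul_mul, Matrix.mul_smul,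
      Matrix.trace_sub, Matrix.trace_smul, Matrix.trace_one, Fintype.card_fin, htrPi, htrρPi, htr,
      Matrix.one_mul, Matrix.mul_one, smul_smul, smul_eq_mul, hc]
    push_cast
    field_simp
    ring
  have htrρtρt : (ρt * ρt).trace = (ρ * ρ).trace - (d:ℂ)⁻¹ := by
    simp only [hρt, Matrix.sub_mul, Matrix.mul_sub, Matrix.smul_mul, Matrix.mul_smul,
      Matrix.trace_sub, Matrix.trace_smul, Matrix.trace_one, Fintype.card_fin, htr,
      Matrix.one_mul, Matrix.mul_one, smul_smul, smul_eq_mul]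
    field_simp
    ring
  have hcrow : ∀ i, ∑ k, c i k = 0 := by
    intro i
    simp only [hc, Finset.sum_sub_distrib, hsum_p i, Finset.sum_const, Finset.card_univ,
      Fintype.card_fin, nsmul_eq_mul]
    field_simp
    simp
  have hcrowC : ∀ i, ∑ k, ((c i k : ℝ):ℂ) = 0 := by
    intro i
    rw [← Complex.ofReal_sum, hcrow i, Complex.ofReal_zero]
  -- traces involving X
  set Sc : ℝ := ∑ i, ∑ k, (c i k)^2 with hSc
  have htrρtX : (ρt * X).trace = ((Sc:ℝ):ℂ) := by
    rw [hX, Finset.mul_sum]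
    simp only [Finset.mul_sum, Matrix.mul_smul, Matrix.trace_sum, Matrix.trace_smul,
      smul_eq_mul, htrρtPt]
    rw [hSc]
    push_cast
    exact Finset.sum_congr rfl fun i _ => Finset.sum_congr rfl fun k _ => by ring
  have htrXρt : (X * ρt).trace = ((Sc:ℝ):ℂ) := by
    rw [Matrix.trace_mul_comm, htrρtX]
  have htrXX : (X * X).trace = ((Sc:ℝ):ℂ) := by
    have hexp : (X * X).trace
        = ∑ i, ∑ k, ∑ j, ∑ l, ((c i k:ℝ):ℂ) * (((c j l:ℝ):ℂ) * (Pt i k * Pt j l).trace) := by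
      rw [hX]
      simp only [Finset.sum_mul, Finset.mul_sum, Matrix.smul_mul, Matrix.mul_smul,
        Matrix.trace_sum, Matrix.trace_smul, smul_smul, smul_eq_mul]
      exact Finset.sum_congr rfl fun i _ => Finset.sum_congr rfl fun k _ =>
        Finset.sum_congr rfl fun j _ => Finset.sum_congr rfl fun l _ => by rw [Matrix.trace_mul_comm]; push_cast; ring
    rw [hexp]
    have hin : ∀ i k, (∑ j, ∑ l, ((c i k:ℝ):ℂ) * (((c j l:ℝ):ℂ) * (Pt i k * Pt j l).trace))
        = ((c i k:ℝ):ℂ)^2 := by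
      intro i k
      rw [Finset.sum_eq_single i]
      · have h1 : ∀ l, ((c i k:ℝ):ℂ) * (((c i l:ℝ):ℂ) * (Pt i k * Pt i l).trace)
            = ((c i k:ℝ):ℂ) * (((c i l:ℝ):ℂ) * (if k = l then 1 else 0))
              - ((c i k:ℝ):ℂ) * (d:ℂ)⁻¹ * ((c i l:ℝ):ℂ) := by
          intro l; rw [htrPtPt_same]; ring
        rw [Finset.sum_congr rfl fun l _ => h1 l, Finset.sum_sub_distrib]
        simp only [← Finset.mul_sum, hcrowC i, mul_zero, sub_zero, mul_ite, mul_one,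
          mul_zero, Finset.sum_ite_eq, Finset.mem_univ, if_true, sq]
      · intro j _ hji
        apply Finset.sum_eq_zero
        intro l _
        rw [htrPtPt_diff i j (Ne.symm hji)]
        ring
      · intro h; exact absurd (Finset.mem_univ i) h
    rw [Finset.sum_congr rfl fun i _ => Finset.sum_congr rfl fun k _ => hin i k]
    rw [hSc]; push_cast; ring
  -- Hermitian
  have hPiH : ∀ i k, (Pi' i k).conjTranspose = Pi' i k := by
    intro i k
    ext a b
    simp only [Matrix.conjTranspose_apply, hPi', Matrix.of_apply, star_mul',
      Complex.star_def, hK, Complex.conj_conj]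
    ring
  have honeH : ((d:ℂ)⁻¹ • (1 : Matrix (Fin d) (Fin d) ℂ)).conjTranspose
      = (d:ℂ)⁻¹ • 1 := by
    rw [Matrix.conjTranspose_smul, Matrix.conjTranspose_one]
    congr 1
    simp
  have hρtH : ρt.conjTranspose = ρt := by
    rw [hρt, Matrix.conjTranspose_sub, hρ.1, honeH]
  have hXH : X.conjTranspose = X := by
    rw [hX]
    rw [Matrix.conjTranspose_sum]
    refine Finset.sum_congr rfl fun i _ => ?_
    rw [Matrix.conjTranspose_sum]
    refine Finset.sum_congr rfl fun k _ => ?_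
    rw [Matrix.conjTranspose_smul, hPt, Matrix.conjTranspose_sub, hPiH, honeH]
    congr 1
    simp [Complex.star_def]
  have hAH : A.conjTranspose = A := by
    rw [hA, Matrix.conjTranspose_sub, hρtH, hXH]
  -- nonnegativity of trace(AᴴA)
  have hnn : 0 ≤ ((A.conjTranspose * A).trace).re := by
    have h1 : (A.conjTranspose * A).trace = ∑ a, ∑ b, (Complex.normSq (A b a) : ℂ) := by
      simp only [Matrix.trace, Matrix.diag, Matrix.mul_apply, Matrix.conjTranspose_apply]
      exact Finset.sum_congr rfl fun a _ => Finset.sum_congr rfl fun b _ => by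
        rw [Complex.star_def, mul_comm, Complex.mul_conj]
    rw [h1, Complex.re_sum]
    apply Finset.sum_nonneg
    intro a _
    rw [Complex.re_sum]
    apply Finset.sum_nonneg
    intro b _
    simp [Complex.normSq_nonneg]
  -- expansion
  have hexpA : (A.conjTranspose * A).trace = ((ρ * ρ).trace - (d:ℂ)⁻¹) - ((Sc:ℝ):ℂ) := by
    rw [hAH, hA]
    simp only [Matrix.sub_mul, Matrix.mul_sub, Matrix.trace_sub]
    rw [htrρtρt, htrρtX, htrXρt, htrXX]
    ring
  have hkey : Sc ≤ ((ρ * ρ).trace).re - 1/(d:ℝ) := by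
    have := hnn
    rw [hexpA] at this
    have hre : (((ρ * ρ).trace - (d:ℂ)⁻¹) - ((Sc:ℝ):ℂ)).re
        = ((ρ * ρ).trace).re - 1/(d:ℝ) - Sc := by
      have : ((d:ℂ)⁻¹ : ℂ) = (((1/(d:ℝ)):ℝ):ℂ) := by push_cast; ring
      rw [Complex.sub_re, Complex.sub_re, this, Complex.ofReal_re, Complex.ofReal_re]
    rw [hre] at this
    linarith
  -- total squared probabilities bound
  have hsq : ∀ i k, (p i k)^2 = (c i k)^2 + (2/(d:ℝ))*(c i k) + 1/(d:ℝ)^2 := by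
    intro i k
    simp only [hc]
    field_simp
    ring
  have hrow : ∀ i, ∑ k, (p i k)^2 = (∑ k, (c i k)^2) + 1/(d:ℝ) := by
    intro i
    rw [Finset.sum_congr rfl fun k _ => hsq i k, Finset.sum_add_distrib,
      Finset.sum_add_distrib, ← Finset.mul_sum, hcrow i]
    simp only [mul_zero, add_zero, Finset.sum_const, Finset.card_univ, Fintype.card_fin,
      nsmul_eq_mul]
    congr 1
    field_simp
  have hp2 : ∑ i, ∑ k, (p i k)^2 ≤ ((ρ * ρ).trace).re + 1 := by
    have h1 : ∑ i, ∑ k, (p i k)^2 = Sc + ((d:ℝ)+1) * (1/(d:ℝ)) := by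
      rw [Finset.sum_congr rfl fun i _ => hrow i, Finset.sum_add_distrib, hSc]
      simp only [Finset.sum_const, Finset.card_univ, Fintype.card_fin, nsmul_eq_mul]
      push_cast
      ring
    have h2 : ((d:ℝ)+1) * (1/(d:ℝ)) = 1 + 1/(d:ℝ) := by field_simp
    rw [h1, h2]
    linarith [hkey]
  -- entropy chain
  set s' : Fin (d+1) → ℝ := fun i => ∑ k, (p i k)^2 with hs'
  have hs'pos : ∀ i, 0 < s' i := by
    intro i
    have hne : ∃ k, p i k ≠ 0 := by
      by_contra h
      push_neg at h
      have := hsum_p i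
      simp only [h, Finset.sum_const_zero] at this
      exact one_ne_zero this.symm
    obtain ⟨k, hk⟩ := hne
    exact Finset.sum_pos' (fun k _ => sq_nonneg _)
      ⟨k, Finset.mem_univ k, lt_of_le_of_ne (sq_nonneg _) (Ne.symm (pow_ne_zero 2 hk))⟩
  have hHi : ∀ i, -∑ k, p i k * Real.logb 2 (p i k) ≥ -Real.logb 2 (s' i) :=
    fun i => shannon_ge_renyi2 (p i) (hge0 i) (hsum_p i)
  have hd1 : (0:ℝ) < (d:ℝ)+1 := by positivity
  have hjen2 : ∑ i, Real.log (s' i) ≤ ((d:ℝ)+1) * Real.log ((∑ i, s' i)/((d:ℝ)+1)) := by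
    have hw : ∑ _i : Fin (d+1), (1/((d:ℝ)+1)) = 1 := by
      simp only [Finset.sum_const, Finset.card_univ, Fintype.card_fin, nsmul_eq_mul]
      push_cast
      field_simp
    have hj := (strictConcaveOn_log_Ioi.concaveOn).le_map_sum (t := Finset.univ)
      (w := fun _ => 1/((d:ℝ)+1)) (p := s') (fun i _ => by positivity) hw
      (fun i _ => hs'pos i)
    have he1 : ∑ i, (1/((d:ℝ)+1)) • Real.log (s' i)
        = (∑ i, Real.log (s' i)) / ((d:ℝ)+1) := by
      rw [Finset.sum_div]
      exact Finset.sum_congr rfl fun i _ => by rw [smul_eq_mul]; ring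
    have he2 : ∑ i, (1/((d:ℝ)+1)) • s' i = (∑ i, s' i)/((d:ℝ)+1) := by
      rw [Finset.sum_div]
      exact Finset.sum_congr rfl fun i _ => by rw [smul_eq_mul]; ring
    rw [he1, he2] at hj
    calc ∑ i, Real.log (s' i)
        = ((∑ i, Real.log (s' i)) / ((d:ℝ)+1)) * ((d:ℝ)+1) := by field_simp
      _ ≤ Real.log ((∑ i, s' i)/((d:ℝ)+1)) * ((d:ℝ)+1) :=
          mul_le_mul_of_nonneg_right hj hd1.le
      _ = ((d:ℝ)+1) * Real.log ((∑ i, s' i)/((d:ℝ)+1)) := by ring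
  have hl2 : (0:ℝ) < Real.log 2 := Real.log_pos one_lt_two
  have hjb : ∑ i, Real.logb 2 (s' i)
      ≤ ((d:ℝ)+1) * Real.logb 2 ((∑ i, s' i)/((d:ℝ)+1)) := by
    simp only [Real.logb]
    rw [← Finset.sum_div, ← mul_div_assoc]
    exact div_le_div_of_nonneg_right hjen2 hl2.le
  have hmeanpos : 0 < (∑ i, s' i)/((d:ℝ)+1) := by
    apply div_pos ?_ hd1
    exact Finset.sum_pos (fun i _ => hs'pos i) Finset.univ_nonempty
  have hmle : (∑ i, s' i)/((d:ℝ)+1) ≤ (((ρ * ρ).trace).re + 1)/((d:ℝ)+1) := by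
    apply div_le_div_of_nonneg_right ?_ hd1.le
    exact hp2
  have hlogble : Real.logb 2 ((∑ i, s' i)/((d:ℝ)+1))
      ≤ Real.logb 2 ((((ρ * ρ).trace).re + 1)/((d:ℝ)+1)) :=
    Real.logb_le_logb_of_le one_lt_two hmeanpos hmle
  have hmul := mul_le_mul_of_nonneg_left hlogble hd1.le
  have hsumH : ∑ i, -Real.logb 2 (s' i)
      ≤ ∑ i, -∑ k, p i k * Real.logb 2 (p i k) :=
    Finset.sum_le_sum fun i _ => hHi i
  have hneg : ∑ i, -Real.logb 2 (s' i) = -∑ i, Real.logb 2 (s' i) := by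
    rw [Finset.sum_neg_distrib]
  linarith [hsumH, hneg, hjb, hmul]
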